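/- Let n ≥ 1, let p : ℝ → ℝ be continuous, and suppose there exists f ∈ Cⁿ(ℝ,ℝ) with f'(y₀) ≠ 0 for some y₀, such that for every c ∈ ℝ the composition x ↦ f(p(x)+c) is Cⁿ. Then p ∈ Cⁿ(ℝ,ℝ). -/

import Mathlib

open Topology

theorem stmt_8 (n : ℕ∞) (hn : 1 ≤ n) (p : ℝ → ℝ) (hp : Continuous p)
    (h : ∃ (f : ℝ → ℝ) (y₀ : ℝ), ContDiff ℝ n f ∧ deriv f y₀ ≠ 0 ∧
      ∀ c : ℝ, ContDiff ℝ n fun x => f (p x + c)) :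
    ContDiff ℝ n p := by
  obtain ⟨f, y₀, hf, hf', hcomp⟩ := h
  rw [contDiff_iff_contDiffAt]
  intro x₀
  have hn' : (n : WithTop ℕ∞) ≠ 0 :=
    (lt_of_lt_of_le zero_lt_one (by exact_mod_cast hn : (1 : WithTop ℕ∞) ≤ (n : WithTop ℕ∞))).ne'
  set c := y₀ - p x₀ with hc
  have hfc : ContDiffAt ℝ n f y₀ := hf.contDiffAt
  have hd : HasDerivAt f (deriv f y₀) y₀ :=
    ((hf.differentiable hn') y₀).hasDerivAt
  have hfd := hd.hasFDerivAt_equiv hf'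
  -- local inverse g of f near y₀
  set g := hfc.localInverse hfd hn' with hg
  have hginv : ∀ᶠ y in 𝓝 y₀, g (f y) = y :=
    (hfc.hasStrictFDerivAt' hfd hn').eventually_left_inverse
  have hgC : ContDiffAt ℝ n g (f y₀) := hfc.to_localInverse hfd hn'
  -- q x := p x + c tends to y₀ at x₀
  have hq : ContinuousAt (fun x => p x + c) x₀ := (hp.add continuous_const).continuousAt
  have hq0 : p x₀ + c = y₀ := by simp [hc]
  have hlim : Filter.Tendsto (fun x => p x + c) (𝓝 x₀) (𝓝 y₀) := by
    rw [← hq0]; exact hq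
  have hev : ∀ᶠ x in 𝓝 x₀, g (f (p x + c)) = p x + c := hlim.eventually hginv
  have hcompC : ContDiffAt ℝ n (fun x => g (f (p x + c))) x₀ := by
    have h1 : ContDiffAt ℝ n (fun x => f (p x + c)) x₀ := (hcomp c).contDiffAt
    have h2 : ContDiffAt ℝ n g (f (p x₀ + c)) := by rw [hq0]; exact hgC
    exact h2.comp x₀ h1
  have : ContDiffAt ℝ n (fun x => p x + c) x₀ := hcompC.congr_of_eventuallyEq (by
    filter_upwards [hev] with x hx using hx.symm)
  have := this.sub (contDiffAt_const (c := c))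
  simpa using this
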